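/- Let b ∈ ℂ with 0 < |b| < 4/5, let ψ_b(λ) = (λ − b)/(1 − conj(b)·λ), and define D_b = 𝔻² \ {(ψ_b(λ), λ) : 1/2 ≤ |λ| < 1}. Then the map φ(λ) = (λ, −λ) maps the open unit disc 𝔻 into D_b. -/

import Mathlib

open Complex

/-- Remark after Example 4: for `0 < |b| < 4/5`, with `ψ_b(l) = (l − b)/(1 − conj(b)l)` and
`D_b = 𝔻² \ {(ψ_b(l), l) : 1/2 ≤ |l| < 1}`, the map `φ(l) = (l, −l)` sends the
unit disc into `D_b`. -/
theorem stmt8 (b : ℂ) (hb0 : 0 < ‖b‖) (hb : ‖b‖ < 4 / 5)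
    (ψb : ℂ → ℂ) (hψb : ∀ l : ℂ, ψb l = (l - b) / (1 - (starRingEnd ℂ) b * l))
    (Db : Set (ℂ × ℂ))
    (hDb : Db = {z : ℂ × ℂ | ‖z.1‖ < 1 ∧ ‖z.2‖ < 1} \
      {z : ℂ × ℂ | ∃ l : ℂ, z = (ψb l, l) ∧ 1 / 2 ≤ ‖l‖ ∧ ‖l‖ < 1})
    (φ : ℂ → ℂ × ℂ) (hφ : ∀ l : ℂ, φ l = (l, -l)) :
    ∀ l ∈ Metric.ball (0 : ℂ) 1, φ l ∈ Db := by
  intro l hl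
  rw [Metric.mem_ball, dist_zero_right] at hl
  rw [hDb, hφ]
  constructor
  · exact ⟨hl, by simpa using hl⟩
  · rintro ⟨μ, heq, hμ1, hμ2⟩
    have h1 : l = ψb μ := congrArg Prod.fst heq
    have h2 : -l = μ := congrArg Prod.snd heq
    subst h2
    rw [hψb] at h1
    have hden : (1 : ℂ) - (starRingEnd ℂ) b * (-l) ≠ 0 := by
      intro h
      have : ‖(starRingEnd ℂ) b * (-l)‖ = 1 := by
        have : (starRingEnd ℂ) b * (-l) = 1 := by linear_combination -h
        rw [this]; simp
      rw [norm_mul, norm_neg, Complex.norm_conj] at this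
      nlinarith [norm_nonneg b, norm_nonneg l]
    rw [eq_div_iff hden] at h1
    have hb2 : b + 2 * l = -((starRingEnd ℂ) b * l ^ 2) := by linear_combination h1
    have habs : ‖b + 2 * l‖ = ‖b‖ * ‖l‖ ^ 2 := by
      rw [hb2, norm_neg, norm_mul, norm_pow, Complex.norm_conj]
    have htri : 2 * ‖l‖ ≤ ‖b + 2 * l‖ + ‖b‖ := by
      calc 2 * ‖l‖ = ‖(b + 2 * l) - b‖ := by
            rw [show (b + 2 * l) - b = 2 * l by ring, norm_mul]; simp
        _ ≤ ‖b + 2 * l‖ + ‖b‖ := by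
            exact norm_sub_le (b + 2 * l) b
    rw [habs] at htri
    rw [norm_neg] at hμ1 hμ2
    set t := ‖l‖
    set r := ‖b‖
    nlinarith [mul_nonneg (by linarith : (0:ℝ) ≤ 2*t-1) (by linarith : (0:ℝ) ≤ 2 - t),
      sq_nonneg t, hb0.le]
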